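/- arXiv:1412.0987 — 3 statements merged into one kernel-verified Lean document; each statement's English description precedes it below -/
import Mathlib

section
/- Let Δ be Z-graded with partial order ≼ on Δ⁺ (γ ≽ μ iff γ−μ is a nonnegative integer combination of simple roots), and let I be a lower ideal of the poset Δ(1) (with the induced order, where γ covers γ' iff γ−γ' ∈ Π(0)). Then for every k ≥ 1, the set I^k = (I + I^{k-1}) ∩ Δ is a lower ideal of the poset Δ(k). Dually, if I is an upper ideal of Δ(1), then I^k is an upper ideal of Δ(k) for all k ≥ 1. -/
open RealInnerProductSpace

variable {V : Type*} [NormedAddCommGroup V] [InnerProductSpace ℝ V] [FiniteDimensional ℝ V]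

/-- The orthogonal reflection in the hyperplane orthogonal to `α`. -/
noncomputable def sref (α : V) : V ≃ₗ[ℝ] V :=
  (Submodule.reflection ((ℝ ∙ α)ᗮ)).toLinearEquiv

/-- `Δ` is an (irreducible, crystallographic, reduced) root system, equipped with a
`ℤ`-grading `d` (so that `Δ(i) = {γ ∈ Δ | d γ = i}`) and a compatible set `Pos = Δ⁺`
of positive roots (compatibility: every root of level `≥ 1` is positive). -/
structure GradedRootSystem (Δ : Set V) (d : V → ℤ) (Pos : Set V) : Prop where
  finite : Δ.Finite
  span_top : Submodule.span ℝ Δ = ⊤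
  nonzero : ∀ α ∈ Δ, α ≠ 0
  neg_mem : ∀ α ∈ Δ, -α ∈ Δ
  reduced : ∀ α ∈ Δ, ∀ c : ℝ, c • α ∈ Δ → c = 1 ∨ c = -1
  reflect_mem : ∀ α ∈ Δ, ∀ β ∈ Δ, β - (2 * ⟪β, α⟫ / ⟪α, α⟫) • α ∈ Δ
  crystallographic : ∀ α ∈ Δ, ∀ β ∈ Δ, ∃ n : ℤ, (n : ℝ) = 2 * ⟪β, α⟫ / ⟪α, α⟫
  irreducible : ∀ Δ₁ Δ₂ : Set V, Δ = Δ₁ ∪ Δ₂ → (∀ a ∈ Δ₁, ∀ b ∈ Δ₂, ⟪a, b⟫ = 0) →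
    Δ₁ = ∅ ∨ Δ₂ = ∅
  grade_add : ∀ γ₁ ∈ Δ, ∀ γ₂ ∈ Δ, γ₁ + γ₂ ∈ Δ → d (γ₁ + γ₂) = d γ₁ + d γ₂
  grade_neg : ∀ γ ∈ Δ, d (-γ) = - d γ
  pos_subset : Pos ⊆ Δ
  pos_iff : ∀ γ ∈ Δ, (γ ∈ Pos ↔ -γ ∉ Pos)
  pos_add : ∀ γ₁ ∈ Pos, ∀ γ₂ ∈ Pos, γ₁ + γ₂ ∈ Δ → γ₁ + γ₂ ∈ Pos
  compatible : ∀ γ ∈ Δ, 1 ≤ d γ → γ ∈ Pos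

/-- The level set `Δ(i)` of the grading. -/
def level (Δ : Set V) (d : V → ℤ) (i : ℤ) : Set V := {γ ∈ Δ | d γ = i}

/-- `Δ(≥ k)`. -/
def levelGE (Δ : Set V) (d : V → ℤ) (k : ℤ) : Set V := {γ ∈ Δ | k ≤ d γ}

/-- `Δ(≤ k)`. -/
def levelLE (Δ : Set V) (d : V → ℤ) (k : ℤ) : Set V := {γ ∈ Δ | d γ ≤ k}

/-- `Δ(0)⁺`, the positive part of `Δ(0)`. -/
def pos0 (d : V → ℤ) (Pos : Set V) : Set V := {γ ∈ Pos | d γ = 0}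

/-- The simple roots of a positive system `P`: positive roots that are not the sum
of two positive roots. -/
def simpleRoots (P : Set V) : Set V := {γ ∈ P | ¬ ∃ a ∈ P, ∃ b ∈ P, γ = a + b}

/-- `idealPow Δ I k = I^k`, with `I¹ = I` and `I^{k+1} = (I + I^k) ∩ Δ`
(and `I⁰ = ∅` by convention). -/
def idealPow (Δ I : Set V) : ℕ → Set V
  | 0 => ∅
  | 1 => I
  | (k+2) => {x ∈ Δ | ∃ a ∈ I, ∃ b ∈ idealPow Δ I (k+1), x = a + b}

/-- `⟨I⟩ = ⋃_{k ≥ 1} I^k`. -/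
def gen (Δ I : Set V) : Set V := ⋃ k : ℕ, idealPow Δ I (k+1)

/-- A subset `M` of roots is closed if it is closed under root addition. -/
def IsClosedSubset (Δ M : Set V) : Prop :=
  ∀ γ₁ ∈ M, ∀ γ₂ ∈ M, γ₁ + γ₂ ∈ Δ → γ₁ + γ₂ ∈ M

/-- Bi-convexity of `M ⊆ Δ⁺`: both `M` and `Δ⁺ \ M` are closed. -/
def IsBiConvex (Δ Pos M : Set V) : Prop :=
  IsClosedSubset Δ M ∧ IsClosedSubset Δ (Pos \ M)

/-- The partial order on each level `Δ(i)`: `γ' ≼ γ` iff `γ - γ'` is a nonnegative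
integral combination of the simple roots `Π(0)` of `Δ(0)⁺`. -/
def leLevel (d : V → ℤ) (Pos : Set V) (γ' γ : V) : Prop :=
  γ - γ' ∈ AddSubmonoid.closure (simpleRoots (pos0 d Pos))

/-- A lower ideal of the weight poset `Δ(i)`. -/
def IsLowerIdeal (Δ : Set V) (d : V → ℤ) (Pos : Set V) (i : ℤ) (I : Set V) : Prop :=
  I ⊆ level Δ d i ∧ ∀ γ ∈ I, ∀ ν ∈ level Δ d i, leLevel d Pos ν γ → ν ∈ I

/-- An upper ideal of the weight poset `Δ(i)`. -/
def IsUpperIdeal (Δ : Set V) (d : V → ℤ) (Pos : Set V) (i : ℤ) (I : Set V) : Prop :=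
  I ⊆ level Δ d i ∧ ∀ γ ∈ I, ∀ ν ∈ level Δ d i, leLevel d Pos γ ν → ν ∈ I

/-- The Weyl group of the set of roots `S`: the subgroup of `GL(V)` generated by the
reflections `s_α`, `α ∈ S`. -/
noncomputable def weyl (S : Set V) : Subgroup (V ≃ₗ[ℝ] V) :=
  Subgroup.closure {g | ∃ α ∈ S, g = sref α}

/-- The inversion set `N(w) = {γ ∈ Δ⁺ | -w(γ) ∈ Δ⁺}`. -/
def invSet (Pos : Set V) (w : V ≃ₗ[ℝ] V) : Set V := {γ ∈ Pos | -(w γ) ∈ Pos}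

/-- `W⁰`, the minimal length coset representatives of `W/W(0)`:
elements of `W` sending `Δ(0)⁺` into `Δ⁺`. -/
noncomputable def W0 (Δ : Set V) (d : V → ℤ) (Pos : Set V) : Set (V ≃ₗ[ℝ] V) :=
  {w | w ∈ weyl Δ ∧ ∀ γ ∈ pos0 d Pos, w γ ∈ Pos}

set_option linter.unusedSectionVars false
set_option linter.unusedVariables false

variable {Δ : Set V} {d : V → ℤ} {Pos : Set V}

lemma grs_inner_self_pos (h : GradedRootSystem Δ d Pos) {x : V} (hx : x ∈ Δ) :
    (0:ℝ) < ⟪x, x⟫ :=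
  lt_of_le_of_ne real_inner_self_nonneg
    (fun hc => h.nonzero x hx (inner_self_eq_zero.mp hc.symm))

/-- If `x, y` are roots with `⟪x,y⟫ > 0` and `x ≠ y`, then `x - y` is a root. -/
lemma grs_sub_mem (h : GradedRootSystem Δ d Pos) {x y : V} (hx : x ∈ Δ) (hy : y ∈ Δ)
    (hpos : 0 < ⟪x, y⟫) (hne : x ≠ y) : x - y ∈ Δ := by
  obtain ⟨n, hn⟩ := h.crystallographic y hy x hx
  obtain ⟨m, hm⟩ := h.crystallographic x hx y hy
  have hyy := grs_inner_self_pos h hy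
  have hxx := grs_inner_self_pos h hx
  have hyx : ⟪y, x⟫ = ⟪x, y⟫ := real_inner_comm x y
  have hnpos : (0:ℝ) < n := by rw [hn]; positivity
  have hmpos : (0:ℝ) < m := by rw [hm, hyx]; positivity
  have hn1 : 1 ≤ n := by exact_mod_cast hnpos
  have hm1 : 1 ≤ m := by exact_mod_cast hmpos
  rcases eq_or_lt_of_le hn1 with h1 | h1
  · have hr := h.reflect_mem y hy x hx
    rw [← hn, ← h1] at hr
    simpa using hr
  rcases eq_or_lt_of_le hm1 with h2 | h2
  · have hr := h.reflect_mem x hx y hy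
    rw [← hm, ← h2] at hr
    have hr2 : -(y - x) ∈ Δ := h.neg_mem _ (by simpa using hr)
    simpa using hr2
  -- n ≥ 2 and m ≥ 2: forces n = m = 2 and then x = y, contradiction
  exfalso
  have hcs : ⟪x, y⟫ * ⟪x, y⟫ ≤ ⟪x, x⟫ * ⟪y, y⟫ := real_inner_mul_inner_self_le x y
  have hnmR : (n:ℝ) * (m:ℝ) ≤ 4 := by
    rw [hn, hm, hyx, div_mul_div_comm, div_le_iff₀ (by positivity)]
    nlinarith
  have hnm : n * m ≤ 4 := by exact_mod_cast hnmR
  have hn2 : n = 2 := by nlinarith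
  have hm2 : m = 2 := by nlinarith
  have e1 : ⟪x, y⟫ = ⟪y, y⟫ := by
    have : ((2:ℤ):ℝ) = 2 * ⟪x, y⟫ / ⟪y, y⟫ := by rw [← hn2]; exact hn
    field_simp at this; push_cast at this; linarith
  have e2 : ⟪x, y⟫ = ⟪x, x⟫ := by
    have : ((2:ℤ):ℝ) = 2 * ⟪y, x⟫ / ⟪x, x⟫ := by rw [← hm2]; exact hm
    rw [hyx] at this; field_simp at this; push_cast at this; linarith
  have hz : ⟪x - y, x - y⟫ = (0:ℝ) := by
    rw [inner_sub_left, inner_sub_right, inner_sub_right, hyx]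
    linarith
  exact hne (sub_eq_zero.mp (inner_self_eq_zero.mp hz))

lemma grs_add_mem (h : GradedRootSystem Δ d Pos) {x y : V} (hx : x ∈ Δ) (hy : y ∈ Δ)
    (hneg : ⟪x, y⟫ < 0) (hne : x ≠ -y) : x + y ∈ Δ := by
  have h1 := grs_sub_mem h hx (h.neg_mem y hy)
    (by rw [inner_neg_right]; linarith) hne
  simpa [sub_neg_eq_add] using h1

/-- Key decomposition lemma. -/
lemma grs_key (h : GradedRootSystem Δ d Pos) {a b c : V} (ha : a ∈ Δ) (hb : b ∈ Δ)
    (hc : c ∈ Δ) (hab : a + b ∈ Δ) (hnu : a + b + c ∈ Δ)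
    (h1 : a ≠ -c) (h2 : b ≠ -c) (h3 : a + b + c ≠ a) (h4 : a + b + c ≠ b) :
    a + c ∈ Δ ∨ b + c ∈ Δ := by
  by_contra hcon
  push_neg at hcon
  obtain ⟨hac, hbc⟩ := hcon
  have e1 : 0 ≤ ⟪a, c⟫ := by
    by_contra hlt; push_neg at hlt; exact hac (grs_add_mem h ha hc hlt h1)
  have e2 : 0 ≤ ⟪b, c⟫ := by
    by_contra hlt; push_neg at hlt; exact hbc (grs_add_mem h hb hc hlt h2)
  have e3 : ⟪a + b + c, a⟫ ≤ 0 := by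
    by_contra hlt; push_neg at hlt
    have hm := grs_sub_mem h hnu ha hlt h3
    have he : a + b + c - a = b + c := by abel
    rw [he] at hm
    exact hbc hm
  have e4 : ⟪a + b + c, b⟫ ≤ 0 := by
    by_contra hlt; push_neg at hlt
    have hm := grs_sub_mem h hnu hb hlt h4
    have : a + b + c - b = a + c := by abel
    rw [this] at hm
    exact hac hm
  have hpos : 0 < ⟪a + b, a + b⟫ := grs_inner_self_pos h hab
  simp only [inner_add_left, inner_add_right] at e3 e4 hpos
  have hca := real_inner_comm c a
  have hcb := real_inner_comm c b
  have hba := real_inner_comm b a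
  linarith

lemma grs_grade_sub (h : GradedRootSystem Δ d Pos) {x y : V} (hx : x ∈ Δ) (hy : y ∈ Δ)
    (hxy : x - y ∈ Δ) : d (x - y) = d x - d y := by
  have hg := h.grade_add (x - y) hxy y hy (by simpa using hx)
  rw [sub_add_cancel] at hg
  omega

lemma grs_simple_facts (h : GradedRootSystem Δ d Pos) {α : V}
    (hα : α ∈ simpleRoots (pos0 d Pos)) : α ∈ Δ ∧ d α = 0 :=
  ⟨h.pos_subset hα.1.1, hα.1.2⟩

lemma grs_pow_level (h : GradedRootSystem Δ d Pos) {I : Set V} (hI : I ⊆ level Δ d 1) :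
    ∀ k : ℕ, 1 ≤ k → idealPow Δ I k ⊆ level Δ d (k : ℤ) := by
  intro k
  induction k using Nat.strong_induction_on with
  | _ k ih =>
    rcases k with _ | _ | k
    · intro hk; exact absurd hk (by norm_num)
    · intro _; simpa [idealPow] using hI
    · intro _ x hx
      obtain ⟨hxΔ, a, haI, b, hbI, hxe⟩ := hx
      have ha := hI haI
      have hb := ih (k+1) (by omega) (by omega) hbI
      refine ⟨hxΔ, ?_⟩
      rw [hxe, h.grade_add a ha.1 b hb.1 (by rw [← hxe]; exact hxΔ), ha.2, hb.2]
      push_cast; ring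

lemma grs_cover_lower (h : GradedRootSystem Δ d Pos) {I : Set V}
    (hI : IsLowerIdeal Δ d Pos 1 I) :
    ∀ k : ℕ, 1 ≤ k → ∀ γ ∈ idealPow Δ I k, ∀ α ∈ simpleRoots (pos0 d Pos),
      γ - α ∈ Δ → γ - α ∈ idealPow Δ I k := by
  intro k
  induction k using Nat.strong_induction_on with
  | _ k ih =>
    rcases k with _ | _ | k
    · intro hk; exact absurd hk (by norm_num)
    · intro _ γ hγ α hα hν
      have hγ1 := hI.1 hγ
      obtain ⟨hαΔ, hα0⟩ := grs_simple_facts h hα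
      have hν1 : γ - α ∈ level Δ d 1 :=
        ⟨hν, by rw [grs_grade_sub h hγ1.1 hαΔ hν, hγ1.2, hα0]; ring⟩
      exact hI.2 γ hγ (γ - α) hν1 (by
        show γ - (γ - α) ∈ _
        simpa using AddSubmonoid.subset_closure hα)
    · intro _ γ hγ α hα hν
      obtain ⟨hγΔ, a, haI, b, hbI, he⟩ := hγ
      obtain ⟨hαΔ, hα0⟩ := grs_simple_facts h hα
      have ha := hI.1 haI
      have hb := grs_pow_level h hI.1 (k+1) (by omega) hbI
      have hnαΔ : -α ∈ Δ := h.neg_mem α hαΔ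
      have habΔ : a + b ∈ Δ := he ▸ hγΔ
      have hnuΔ : a + b + -α ∈ Δ := by
        have : a + b + -α = γ - α := by rw [he]; abel
        rw [this]; exact hν
      have h1 : a ≠ - -α := by
        rw [neg_neg]; intro hh
        have := ha.2; rw [hh, hα0] at this; omega
      have h2 : b ≠ - -α := by
        rw [neg_neg]; intro hh
        have := hb.2; rw [hh, hα0] at this; omega
      have h3 : a + b + -α ≠ a := by
        intro hh
        have hsub : b - α = (a + b + -α) - a := by abel
        rw [hh, sub_self] at hsub
        have hbα := sub_eq_zero.mp hsub
        have := hb.2; rw [hbα, hα0] at this; omega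
      have h4 : a + b + -α ≠ b := by
        intro hh
        have hsub : a - α = (a + b + -α) - b := by abel
        rw [hh, sub_self] at hsub
        have haα := sub_eq_zero.mp hsub
        have := ha.2; rw [haα, hα0] at this; omega
      rcases grs_key h ha.1 hb.1 hnαΔ habΔ hnuΔ h1 h2 h3 h4 with hk1 | hk2
      · have haα : a - α ∈ Δ := by rw [sub_eq_add_neg]; exact hk1
        have haα1 : a - α ∈ level Δ d 1 :=
          ⟨haα, by rw [grs_grade_sub h ha.1 hαΔ haα, ha.2, hα0]; ring⟩
        have haαI : a - α ∈ I := hI.2 a haI _ haα1 (by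
          show a - (a - α) ∈ _
          simpa using AddSubmonoid.subset_closure hα)
        exact ⟨hν, a - α, haαI, b, hbI, by rw [he]; abel⟩
      · have hbα : b - α ∈ Δ := by rw [sub_eq_add_neg]; exact hk2
        have hbαI : b - α ∈ idealPow Δ I (k+1) :=
          ih (k+1) (by omega) (by omega) b hbI α hα hbα
        exact ⟨hν, a, haI, b - α, hbαI, by rw [he]; abel⟩

lemma grs_cover_upper (h : GradedRootSystem Δ d Pos) {I : Set V}
    (hI : IsUpperIdeal Δ d Pos 1 I) :
    ∀ k : ℕ, 1 ≤ k → ∀ γ ∈ idealPow Δ I k, ∀ α ∈ simpleRoots (pos0 d Pos),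
      γ + α ∈ Δ → γ + α ∈ idealPow Δ I k := by
  intro k
  induction k using Nat.strong_induction_on with
  | _ k ih =>
    rcases k with _ | _ | k
    · intro hk; exact absurd hk (by norm_num)
    · intro _ γ hγ α hα hν
      have hγ1 := hI.1 hγ
      obtain ⟨hαΔ, hα0⟩ := grs_simple_facts h hα
      have hν1 : γ + α ∈ level Δ d 1 :=
        ⟨hν, by rw [h.grade_add γ hγ1.1 α hαΔ hν, hγ1.2, hα0]; ring⟩
      exact hI.2 γ hγ (γ + α) hν1 (by
        show (γ + α) - γ ∈ _
        simpa using AddSubmonoid.subset_closure hα)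
    · intro _ γ hγ α hα hν
      obtain ⟨hγΔ, a, haI, b, hbI, he⟩ := hγ
      obtain ⟨hαΔ, hα0⟩ := grs_simple_facts h hα
      have ha := hI.1 haI
      have hb := grs_pow_level h hI.1 (k+1) (by omega) hbI
      have habΔ : a + b ∈ Δ := he ▸ hγΔ
      have hnuΔ : a + b + α ∈ Δ := by rw [← he]; exact hν
      have hnα0 : d (-α) = 0 := by rw [h.grade_neg α hαΔ, hα0]; ring
      have h1 : a ≠ -α := by
        intro hh
        have := ha.2; rw [hh, hnα0] at this; omega
      have h2 : b ≠ -α := by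
        intro hh
        have := hb.2; rw [hh, hnα0] at this; omega
      have h3 : a + b + α ≠ a := by
        intro hh
        have hsub : b - -α = (a + b + α) - a := by abel
        rw [hh, sub_self] at hsub
        have hbα := sub_eq_zero.mp hsub
        have := hb.2; rw [hbα, hnα0] at this; omega
      have h4 : a + b + α ≠ b := by
        intro hh
        have hsub : a - -α = (a + b + α) - b := by abel
        rw [hh, sub_self] at hsub
        have haα := sub_eq_zero.mp hsub
        have := ha.2; rw [haα, hnα0] at this; omega
      rcases grs_key h ha.1 hb.1 hαΔ habΔ hnuΔ h1 h2 h3 h4 with hk1 | hk2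
      · have haα1 : a + α ∈ level Δ d 1 :=
          ⟨hk1, by rw [h.grade_add a ha.1 α hαΔ hk1, ha.2, hα0]; ring⟩
        have haαI : a + α ∈ I := hI.2 a haI _ haα1 (by
          show (a + α) - a ∈ _
          simpa using AddSubmonoid.subset_closure hα)
        exact ⟨hν, a + α, haαI, b, hbI, by rw [he]; abel⟩
      · have hbαI : b + α ∈ idealPow Δ I (k+1) :=
          ih (k+1) (by omega) (by omega) b hbI α hα hk2
        exact ⟨hν, a, haI, b + α, hbαI, by rw [he]; abel⟩

lemma grs_exists_pos_inner (h : GradedRootSystem Δ d Pos) {σ : V} (hσ : σ ≠ 0)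
    (l : List V) (hsum : l.sum = σ) : ∃ α ∈ l, 0 < ⟪σ, α⟫ := by
  by_contra hcon
  push_neg at hcon
  have key : ∀ L : List V, (∀ x ∈ L, ⟪σ, x⟫ ≤ 0) → ⟪σ, L.sum⟫ ≤ 0 := by
    intro L
    induction L with
    | nil => intro _; simp
    | cons y L ihL =>
      intro hL
      rw [List.sum_cons, inner_add_right]
      have i1 := hL y List.mem_cons_self
      have i2 := ihL (fun x hx => hL x (List.mem_cons_of_mem _ hx))
      linarith
  have h1 := key l hcon
  rw [hsum] at h1
  have h2 : 0 < ⟪σ, σ⟫ :=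
    lt_of_le_of_ne real_inner_self_nonneg (fun hc => hσ (inner_self_eq_zero.mp hc.symm))
  linarith

lemma grs_chain_lower (h : GradedRootSystem Δ d Pos) {I : Set V}
    (hI : IsLowerIdeal Δ d Pos 1 I) (k : ℕ) (hk : 1 ≤ k) :
    ∀ (l : List V), (∀ x ∈ l, x ∈ simpleRoots (pos0 d Pos)) →
      ∀ γ ∈ idealPow Δ I k, ∀ ν ∈ level Δ d (k : ℤ), γ - ν = l.sum →
        ν ∈ idealPow Δ I k := by
  suffices H : ∀ n : ℕ, ∀ l : List V, l.length = n →
      (∀ x ∈ l, x ∈ simpleRoots (pos0 d Pos)) →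
      ∀ γ ∈ idealPow Δ I k, ∀ ν ∈ level Δ d (k : ℤ), γ - ν = l.sum →
        ν ∈ idealPow Δ I k by
    exact fun l => H l.length l rfl
  intro n
  induction n using Nat.strong_induction_on with
  | _ n ihn =>
    intro l hlen hmem γ hγ ν hν hdiff
    by_cases hγν : γ = ν
    · rw [← hγν]; exact hγ
    have hσ : γ - ν ≠ 0 := sub_ne_zero.mpr hγν
    obtain ⟨α, hαl, hαpos⟩ := grs_exists_pos_inner h hσ l hdiff.symm
    have hα := hmem α hαl
    obtain ⟨hαΔ, hα0⟩ := grs_simple_facts h hα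
    have hγlvl := grs_pow_level h hI.1 k hk hγ
    have hkZ : (1:ℤ) ≤ (k:ℤ) := by exact_mod_cast hk
    -- the remaining list
    classical
    set l₂ := l.erase α with hl₂
    have hperm := List.perm_cons_erase hαl
    have hsum2 : l.sum = α + l₂.sum := by
      rw [hperm.sum_eq, List.sum_cons]
    have hlen2 : l₂.length < n := by
      have h1 : l₂.length = l.length - 1 := List.length_erase_of_mem hαl
      have h2 : 1 ≤ l.length := List.length_pos_iff.mpr (List.ne_nil_of_mem hαl)
      omega
    have hmem2 : ∀ x ∈ l₂, x ∈ simpleRoots (pos0 d Pos) :=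
      fun x hx => hmem x (List.mem_of_mem_erase hx)
    rw [inner_sub_left] at hαpos
    rcases lt_or_ge 0 ⟪γ, α⟫ with hcase | hcase
    · -- γ - α is a root, descend from γ
      have hne : γ ≠ α := by
        intro hh; have := hγlvl.2; rw [hh, hα0] at this; omega
      have hγα : γ - α ∈ Δ := grs_sub_mem h hγlvl.1 hαΔ hcase hne
      have hγαI : γ - α ∈ idealPow Δ I k := grs_cover_lower h hI k hk γ hγ α hα hγα
      exact ihn l₂.length hlen2 l₂ rfl hmem2 (γ - α) hγαI ν hν (by
        have : γ - α - ν = γ - ν - α := by abel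
        rw [this, hdiff, hsum2]; abel)
    · -- ν + α is a root, ascend to ν + α
      have hνα0 : ⟪ν, α⟫ < 0 := by linarith
      have hne : ν ≠ -α := by
        intro hh
        have := hν.2
        rw [hh, h.grade_neg α hαΔ, hα0] at this; omega
      have hναΔ : ν + α ∈ Δ := grs_add_mem h hν.1 hαΔ hνα0 hne
      have hναlvl : ν + α ∈ level Δ d (k : ℤ) :=
        ⟨hναΔ, by rw [h.grade_add ν hν.1 α hαΔ hναΔ, hν.2, hα0]; ring⟩
      have hναI : ν + α ∈ idealPow Δ I k :=
        ihn l₂.length hlen2 l₂ rfl hmem2 γ hγ (ν + α) hναlvl (by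
          have : γ - (ν + α) = γ - ν - α := by abel
          rw [this, hdiff, hsum2]; abel)
      have := grs_cover_lower h hI k hk (ν + α) hναI α hα (by
        simpa using hν.1)
      simpa using this

lemma grs_chain_upper (h : GradedRootSystem Δ d Pos) {I : Set V}
    (hI : IsUpperIdeal Δ d Pos 1 I) (k : ℕ) (hk : 1 ≤ k) :
    ∀ (l : List V), (∀ x ∈ l, x ∈ simpleRoots (pos0 d Pos)) →
      ∀ γ ∈ idealPow Δ I k, ∀ ν ∈ level Δ d (k : ℤ), ν - γ = l.sum →
        ν ∈ idealPow Δ I k := by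
  suffices H : ∀ n : ℕ, ∀ l : List V, l.length = n →
      (∀ x ∈ l, x ∈ simpleRoots (pos0 d Pos)) →
      ∀ γ ∈ idealPow Δ I k, ∀ ν ∈ level Δ d (k : ℤ), ν - γ = l.sum →
        ν ∈ idealPow Δ I k by
    exact fun l => H l.length l rfl
  intro n
  induction n using Nat.strong_induction_on with
  | _ n ihn =>
    intro l hlen hmem γ hγ ν hν hdiff
    by_cases hγν : ν = γ
    · rw [hγν]; exact hγ
    have hσ : ν - γ ≠ 0 := sub_ne_zero.mpr hγν
    obtain ⟨α, hαl, hαpos⟩ := grs_exists_pos_inner h hσ l hdiff.symm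
    have hα := hmem α hαl
    obtain ⟨hαΔ, hα0⟩ := grs_simple_facts h hα
    have hγlvl := grs_pow_level h hI.1 k hk hγ
    have hkZ : (1:ℤ) ≤ (k:ℤ) := by exact_mod_cast hk
    classical
    set l₂ := l.erase α with hl₂
    have hperm := List.perm_cons_erase hαl
    have hsum2 : l.sum = α + l₂.sum := by
      rw [hperm.sum_eq, List.sum_cons]
    have hlen2 : l₂.length < n := by
      have h1 : l₂.length = l.length - 1 := List.length_erase_of_mem hαl
      have h2 : 1 ≤ l.length := List.length_pos_iff.mpr (List.ne_nil_of_mem hαl)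
      omega
    have hmem2 : ∀ x ∈ l₂, x ∈ simpleRoots (pos0 d Pos) :=
      fun x hx => hmem x (List.mem_of_mem_erase hx)
    rw [inner_sub_left] at hαpos
    rcases lt_or_ge 0 ⟪ν, α⟫ with hcase | hcase
    · -- ν - α is a root, descend to ν - α
      have hne : ν ≠ α := by
        intro hh; have := hν.2; rw [hh, hα0] at this; omega
      have hνα : ν - α ∈ Δ := grs_sub_mem h hν.1 hαΔ hcase hne
      have hναlvl : ν - α ∈ level Δ d (k : ℤ) :=
        ⟨hνα, by rw [grs_grade_sub h hν.1 hαΔ hνα, hν.2, hα0]; ring⟩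
      have hναI : ν - α ∈ idealPow Δ I k :=
        ihn l₂.length hlen2 l₂ rfl hmem2 γ hγ (ν - α) hναlvl (by
          have : ν - α - γ = ν - γ - α := by abel
          rw [this, hdiff, hsum2]; abel)
      have := grs_cover_upper h hI k hk (ν - α) hναI α hα (by
        simpa using hν.1)
      simpa using this
    · -- γ + α is a root, ascend from γ
      have hγα0 : ⟪γ, α⟫ < 0 := by linarith
      have hne : γ ≠ -α := by
        intro hh
        have := hγlvl.2
        rw [hh, h.grade_neg α hαΔ, hα0] at this; omega
      have hγαΔ : γ + α ∈ Δ := grs_add_mem h hγlvl.1 hαΔ hγα0 hne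
      have hγαI : γ + α ∈ idealPow Δ I k := grs_cover_upper h hI k hk γ hγ α hα hγαΔ
      exact ihn l₂.length hlen2 l₂ rfl hmem2 (γ + α) hγαI ν hν (by
        have : ν - (γ + α) = ν - γ - α := by abel
        rw [this, hdiff, hsum2]; abel)

/-- If `I` is a lower (resp. upper) ideal of `Δ(1)`, then `I^k` is a lower
(resp. upper) ideal of `Δ(k)` for every `k ≥ 1`. -/
theorem stmt3 (Δ : Set V) (d : V → ℤ) (Pos : Set V)
    (h : GradedRootSystem Δ d Pos) (I : Set V) :
    (IsLowerIdeal Δ d Pos 1 I → ∀ k : ℕ, 1 ≤ k →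
      IsLowerIdeal Δ d Pos (k : ℤ) (idealPow Δ I k)) ∧
    (IsUpperIdeal Δ d Pos 1 I → ∀ k : ℕ, 1 ≤ k →
      IsUpperIdeal Δ d Pos (k : ℤ) (idealPow Δ I k)) := by
  constructor
  · intro hI k hk
    refine ⟨grs_pow_level h hI.1 k hk, ?_⟩
    intro γ hγ ν hν hle
    obtain ⟨l, hlmem, hlsum⟩ := AddSubmonoid.exists_list_of_mem_closure hle
    exact grs_chain_lower h hI k hk l hlmem γ hγ ν hν hlsum.symm
  · intro hI k hk
    refine ⟨grs_pow_level h hI.1 k hk, ?_⟩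
    intro γ hγ ν hν hle
    obtain ⟨l, hlmem, hlsum⟩ := AddSubmonoid.exists_list_of_mem_closure hle
    exact grs_chain_upper h hI k hk l hlmem γ hγ ν hν hlsum.symm
end

section
/- Let Δ be Z-graded with compatible positive system, and let I be a lower ideal of Δ(1). Then ⟨I⟩ = ⋃_{k≥1} I^k is a bi-convex subset of Δ⁺; that is, both ⟨I⟩ and Δ⁺ \ ⟨I⟩ are closed under addition of roots. -/
open RealInnerProductSpace

variable {V : Type*} [NormedAddCommGroup V] [InnerProductSpace ℝ V] [FiniteDimensional ℝ V]

/-! ### Auxiliary lemmas -/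

section AuxLemmas

set_option linter.unusedSectionVars false

variable {Δ : Set V} {d : V → ℤ} {Pos I : Set V}

private lemma aux_inner_self_pos {x : V} (hx : x ≠ 0) : 0 < ⟪x, x⟫ := by
  have h1 : 0 < ‖x‖ := norm_pos_iff.mpr hx
  rw [real_inner_self_eq_norm_mul_norm]
  positivity

private lemma aux_inner_list_sum (v : V) : ∀ L : List V,
    ⟪v, L.sum⟫ = (L.map (fun x => ⟪v, x⟫)).sum
  | [] => by simp
  | x :: t => by simp [inner_add_right, aux_inner_list_sum v t]

private lemma aux_list_sum_nonpos : ∀ (L : List ℝ), (∀ x ∈ L, x ≤ 0) → L.sum ≤ 0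
  | [], _ => by simp
  | x :: t, hc => by
    have h1 := hc x (by simp)
    have h2 := aux_list_sum_nonpos t (fun y hy => hc y (List.mem_cons_of_mem _ hy))
    rw [List.sum_cons]; linarith

private lemma aux_exists_inner_pos {v : V} {L : List V} (hL : 0 < ⟪v, L.sum⟫) :
    ∃ x ∈ L, 0 < ⟪v, x⟫ := by
  by_contra hc
  push_neg at hc
  rw [aux_inner_list_sum] at hL
  exact absurd hL (not_lt.mpr (aux_list_sum_nonpos _ (by
    intro y hy
    obtain ⟨x, hx, rfl⟩ := List.mem_map.mp hy
    exact hc x hx)))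

private lemma aux_exists_inner_neg {v : V} {L : List V} (hL : ⟪v, L.sum⟫ < 0) :
    ∃ x ∈ L, ⟪v, x⟫ < 0 := by
  by_contra hc
  push_neg at hc
  rw [aux_inner_list_sum] at hL
  have : (0:ℝ) ≤ (L.map (fun x => ⟪v, x⟫)).sum := by
    apply List.sum_nonneg
    intro y hy
    obtain ⟨x, hx, rfl⟩ := List.mem_map.mp hy
    exact hc x hx
  linarith

/-- If `α, β` are roots with `⟪α, β⟫ > 0` and `α ≠ β`, then `α - β` is a root. -/
private lemma aux_sub_mem (h : GradedRootSystem Δ d Pos) {x y : V} (hx : x ∈ Δ) (hy : y ∈ Δ)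
    (hip : 0 < ⟪x, y⟫) (hne : x ≠ y) : x - y ∈ Δ := by
  have hxx := aux_inner_self_pos (h.nonzero x hx)
  have hyy := aux_inner_self_pos (h.nonzero y hy)
  obtain ⟨m, hm⟩ := h.crystallographic y hy x hx
  obtain ⟨n, hn⟩ := h.crystallographic x hx y hy
  rw [real_inner_comm x y] at hn
  -- m = 2⟪x,y⟫/⟪y,y⟫ , n = 2⟪x,y⟫/⟪x,x⟫
  by_cases hm1 : (m : ℝ) = 1
  · have := h.reflect_mem y hy x hx
    rw [← hm, hm1, one_smul] at this
    exact this
  by_cases hn1 : (n : ℝ) = 1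
  · have := h.reflect_mem x hx y hy
    rw [real_inner_comm x y] at this
    rw [← hn, hn1, one_smul] at this
    have := h.neg_mem _ this
    rwa [neg_sub] at this
  exfalso
  have hm0 : 0 < (m : ℝ) := by rw [hm]; exact div_pos (by linarith) hyy
  have hn0 : 0 < (n : ℝ) := by rw [hn]; exact div_pos (by linarith) hxx
  have hm2 : (2 : ℝ) ≤ m := by
    have h1 : (0 : ℤ) < m := by exact_mod_cast hm0
    have h2 : m ≠ 1 := by intro e; exact hm1 (by rw [e]; norm_num)
    have : (2 : ℤ) ≤ m := by omega
    exact_mod_cast this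
  have hn2 : (2 : ℝ) ≤ n := by
    have h1 : (0 : ℤ) < n := by exact_mod_cast hn0
    have h2 : n ≠ 1 := by intro e; exact hn1 (by rw [e]; norm_num)
    have : (2 : ℤ) ≤ n := by omega
    exact_mod_cast this
  -- so ⟪x,y⟫ ≥ ⟪y,y⟫ and ⟪x,y⟫ ≥ ⟪x,x⟫
  have hge1 : ⟪y, y⟫ ≤ ⟪x, y⟫ := by
    have h2' : (2 : ℝ) ≤ 2 * ⟪x, y⟫ / ⟪y, y⟫ := by rw [← hm]; exact hm2
    rw [le_div_iff₀ hyy] at h2'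
    linarith
  have hge2 : ⟪x, x⟫ ≤ ⟪x, y⟫ := by
    have h2' : (2 : ℝ) ≤ 2 * ⟪x, y⟫ / ⟪x, x⟫ := by rw [← hn]; exact hn2
    rw [le_div_iff₀ hxx] at h2'
    linarith
  have hcs : ⟪x, y⟫ ≤ ‖x‖ * ‖y‖ := real_inner_le_norm x y
  have hxn : ⟪x, x⟫ = ‖x‖ * ‖x‖ := real_inner_self_eq_norm_mul_norm x
  have hyn : ⟪y, y⟫ = ‖y‖ * ‖y‖ := real_inner_self_eq_norm_mul_norm y
  have heq : ⟪x, y⟫ = ‖x‖ * ‖y‖ := by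
    apply le_antisymm hcs
    nlinarith [norm_nonneg x, norm_nonneg y]
  have hdep : ‖y‖ • x = ‖x‖ • y := inner_eq_norm_mul_iff_real.mp heq
  have hxnorm : ‖x‖ ≠ 0 := norm_ne_zero_iff.mpr (h.nonzero x hx)
  have hyx : y = (‖y‖ / ‖x‖) • x := by
    rw [div_eq_inv_mul, mul_smul, hdep, smul_smul, inv_mul_cancel₀ hxnorm, one_smul]
  have hmem : (‖y‖ / ‖x‖) • x ∈ Δ := by rw [← hyx]; exact hy
  rcases h.reduced x hx _ hmem with hc | hc
  · rw [hc, one_smul] at hyx; exact hne (hyx ▸ rfl)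
  · have : 0 < ‖y‖ / ‖x‖ := by
      apply div_pos (norm_pos_iff.mpr (h.nonzero y hy)) (norm_pos_iff.mpr (h.nonzero x hx))
    rw [hc] at this; linarith

/-- If `α, β` are roots with `⟪α, β⟫ < 0` and `α + β ≠ 0`, then `α + β` is a root. -/
private lemma aux_add_mem (h : GradedRootSystem Δ d Pos) {x y : V} (hx : x ∈ Δ) (hy : y ∈ Δ)
    (hip : ⟪x, y⟫ < 0) (hne : x + y ≠ 0) : x + y ∈ Δ := by
  have h1 : 0 < ⟪x, -y⟫ := by rw [inner_neg_right]; linarith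
  have h2 : x ≠ -y := fun e => hne (by rw [e]; abel)
  have := aux_sub_mem h hx (h.neg_mem y hy) h1 h2
  rwa [sub_neg_eq_add] at this

/-- A nonempty sum of positive roots is nonzero. -/
private lemma aux_sum_ne_zero (h : GradedRootSystem Δ d Pos) :
    ∀ n (L : List V), L.length = n → (∀ x ∈ L, x ∈ Pos) → L ≠ [] → L.sum ≠ 0 := by
  intro n
  induction n using Nat.strong_induction_on with
  | _ n ih =>
    intro L hlen hmem hne hsum
    classical
    match L, hne with
    | x :: t, _ =>
      have hx : x ∈ Pos := hmem x (by simp)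
      have hxΔ : x ∈ Δ := h.pos_subset hx
      have hsum' : x + t.sum = 0 := by rw [← List.sum_cons]; exact hsum
      rcases eq_or_ne t [] with rfl | htne
      · simp at hsum'; exact h.nonzero x hxΔ hsum'
      · have hin : ⟪x, t.sum⟫ < 0 := by
          have e : t.sum = -x := eq_neg_of_add_eq_zero_right hsum'
          rw [e, inner_neg_right]
          linarith [aux_inner_self_pos (h.nonzero x hxΔ)]
        obtain ⟨y, hyt, hxy⟩ := aux_exists_inner_neg hin
        have hyP : y ∈ Pos := hmem y (List.mem_cons_of_mem _ hyt)
        have hxyΔ : x + y ∈ Δ := by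
          apply aux_add_mem h hxΔ (h.pos_subset hyP) hxy
          intro e
          have hxney : x = -y := eq_neg_of_add_eq_zero_left e
          exact (h.pos_iff y (h.pos_subset hyP)).mp hyP (hxney ▸ hx)
        have hxyP : x + y ∈ Pos := h.pos_add x hx y hyP hxyΔ
        have hts : t.sum = y + (t.erase y).sum := by
          rw [(List.perm_cons_erase hyt).sum_eq, List.sum_cons]
        have hlen' : ((x + y) :: t.erase y).length = t.length := by
          simp [List.length_erase_add_one hyt]
        refine ih t.length (by simp only [List.length_cons] at hlen; omega)
          ((x + y) :: t.erase y) hlen' ?_ (by simp) ?_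
        · intro z hz
          rcases List.mem_cons.mp hz with rfl | hz'
          · exact hxyP
          · exact hmem z (List.mem_cons_of_mem _ (List.mem_of_mem_erase hz'))
        · have he : (t.erase y).sum = t.sum - y := by rw [hts]; abel
          rw [List.sum_cons, he, show x + y + (t.sum - y) = x + t.sum by abel]
          exact hsum'

/-- Two-of-three lemma: if `x, y, z, x + y, x + y + z` are all roots, then
`x + z` or `y + z` is a root (or zero). -/
private lemma aux_two_of_three (h : GradedRootSystem Δ d Pos) {x y z : V}
    (hx : x ∈ Δ) (hy : y ∈ Δ) (hz : z ∈ Δ) (hxy : x + y ∈ Δ) (hs : x + y + z ∈ Δ) :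
    (x + z ∈ Δ ∨ x + z = 0) ∨ (y + z ∈ Δ ∨ y + z = 0) := by
  by_contra hc
  push_neg at hc
  obtain ⟨⟨hxz1, hxz2⟩, hyz1, hyz2⟩ := hc
  have hxz : 0 ≤ ⟪x, z⟫ := by
    by_contra hlt; push_neg at hlt
    exact hxz1 (aux_add_mem h hx hz hlt hxz2)
  have hyz : 0 ≤ ⟪y, z⟫ := by
    by_contra hlt; push_neg at hlt
    exact hyz1 (aux_add_mem h hy hz hlt hyz2)
  have hsx : ⟪x + y + z, x⟫ ≤ 0 := by
    by_contra hlt; push_neg at hlt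
    have hne : x + y + z ≠ x := by
      intro e
      apply hyz2
      have : y + z = (x + y + z) - x := by abel
      rw [this, e, sub_self]
    have := aux_sub_mem h hs hx hlt hne
    rw [show x + y + z - x = y + z by abel] at this
    exact hyz1 this
  have hsy : ⟪x + y + z, y⟫ ≤ 0 := by
    by_contra hlt; push_neg at hlt
    have hne : x + y + z ≠ y := by
      intro e
      apply hxz2
      have : x + z = (x + y + z) - y := by abel
      rw [this, e, sub_self]
    have := aux_sub_mem h hs hy hlt hne
    rw [show x + y + z - y = x + z by abel] at this
    exact hxz1 this
  have e1 : ⟪x + y + z, x⟫ = ⟪x, x⟫ + ⟪y, x⟫ + ⟪z, x⟫ := by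
    rw [inner_add_left, inner_add_left]
  have e2 : ⟪x + y + z, y⟫ = ⟪x, y⟫ + ⟪y, y⟫ + ⟪z, y⟫ := by
    rw [inner_add_left, inner_add_left]
  have e3 : ⟪x + y, x + y⟫ = ⟪x, x⟫ + ⟪x, y⟫ + (⟪y, x⟫ + ⟪y, y⟫) := by
    rw [inner_add_left, inner_add_right, inner_add_right]
  have hfin : ⟪x + y, x + y⟫ ≤ 0 := by
    rw [e1] at hsx; rw [e2] at hsy; rw [e3]
    linarith [real_inner_comm x z, real_inner_comm y z, real_inner_comm x y]
  exact h.nonzero _ hxy (real_inner_self_nonpos.mp hfin)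

/-- Every root in `Δ(0)⁺` is a nonnegative integral combination of the simple
roots of `Δ(0)⁺`. -/
private lemma aux_pos0_closure (h : GradedRootSystem Δ d Pos) :
    ∀ x ∈ pos0 d Pos, x ∈ AddSubmonoid.closure (simpleRoots (pos0 d Pos)) := by
  set P := pos0 d Pos with hP
  have hPpos : P ⊆ Pos := fun z hz => hz.1
  have hPΔ : P ⊆ Δ := fun z hz => h.pos_subset hz.1
  set S : V → Set V :=
    fun v => {q ∈ Δ | v - q ∈ AddSubmonoid.closure P ∧ v ≠ q} with hS
  have hSfin : ∀ v, (S v).Finite := fun v => h.finite.subset (fun q hq => hq.1)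
  have key : ∀ n, ∀ x ∈ P, (S x).ncard = n → x ∈ AddSubmonoid.closure (simpleRoots P) := by
    intro n
    induction n using Nat.strong_induction_on with
    | _ n ih =>
      intro x hx hcard
      by_cases hsimp : x ∈ simpleRoots P
      · exact AddSubmonoid.subset_closure hsimp
      · have hdecomp : ∃ a ∈ P, ∃ b ∈ P, x = a + b := by
          by_contra hno
          exact hsimp ⟨hx, hno⟩
        obtain ⟨a, ha, b, hb, hab⟩ := hdecomp
        have hsub : ∀ c ∈ P, ∀ e ∈ P, x = c + e → S c ⊆ S x := by
          intro c hc e he hce q hq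
          obtain ⟨hqΔ, hqc, hqne⟩ := hq
          refine ⟨hqΔ, ?_, ?_⟩
          · rw [hce, show c + e - q = (c - q) + e by abel]
            exact AddSubmonoid.add_mem _ hqc (AddSubmonoid.subset_closure he)
          · intro hxq
            obtain ⟨L, hLm, hLs⟩ := AddSubmonoid.exists_list_of_mem_closure hqc
            have hsum : (L ++ [e]).sum = x - q := by
              rw [List.sum_append, hLs, List.sum_singleton, hce]; abel
            have hzero : (L ++ [e]).sum = 0 := by rw [hsum, ← hxq, sub_self]
            refine aux_sum_ne_zero h _ (L ++ [e]) rfl ?_ (by simp) hzero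
            intro z hz
            rcases List.mem_append.mp hz with h1 | h1
            · exact hPpos (hLm z h1)
            · rw [List.mem_singleton.mp h1]; exact hPpos he
        have hmemS : ∀ c ∈ P, ∀ e ∈ P, x = c + e → c ∈ S x := by
          intro c hc e he hce
          refine ⟨hPΔ hc, ?_, ?_⟩
          · rw [hce, show c + e - c = e by abel]
            exact AddSubmonoid.subset_closure he
          · intro hxc
            apply h.nonzero e (hPΔ he)
            have : e = x - c := by rw [hce]; abel
            rw [this, ← hxc, sub_self]
        have hnotself : ∀ c : V, c ∉ S c := fun c hq => hq.2.2 rfl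
        have hlt : ∀ c ∈ P, ∀ e ∈ P, x = c + e → (S c).ncard < n := by
          intro c hc e he hce
          rw [← hcard]
          refine Set.ncard_lt_ncard ?_ (hSfin x)
          rw [Set.ssubset_iff_of_subset (hsub c hc e he hce)]
          exact ⟨c, hmemS c hc e he hce, hnotself c⟩
        have iha := ih _ (hlt a ha b hb hab) a ha rfl
        have ihb := ih _ (hlt b hb a ha (by rw [hab, add_comm])) b hb rfl
        rw [hab]
        exact AddSubmonoid.add_mem _ iha ihb
  intro x hx
  exact key _ x hx rfl

private lemma aux_I_facts (h : GradedRootSystem Δ d Pos) (hI : IsLowerIdeal Δ d Pos 1 I)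
    {x : V} (hx : x ∈ I) : x ∈ Δ ∧ d x = 1 ∧ x ∈ Pos := by
  have hl := hI.1 hx
  exact ⟨hl.1, hl.2, h.compatible x hl.1 hl.2.ge⟩

/-- Elements of `I^{k+1}` are roots of level `k+1`. -/
private lemma aux_pow_grade (h : GradedRootSystem Δ d Pos) (hI : IsLowerIdeal Δ d Pos 1 I) :
    ∀ k, ∀ x ∈ idealPow Δ I (k + 1), x ∈ Δ ∧ d x = k + 1 := by
  intro k
  induction k with
  | zero =>
    intro x hx
    have hl := hI.1 hx
    exact ⟨hl.1, by rw [hl.2]; norm_num⟩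
  | succ k ihk =>
    intro x hx
    obtain ⟨hxΔ, a, ha, b, hb, hxe⟩ := hx
    have haf := aux_I_facts h hI ha
    have hbg := ihk b hb
    refine ⟨hxΔ, ?_⟩
    rw [hxe] at hxΔ ⊢
    rw [h.grade_add a haf.1 b hbg.1 hxΔ, haf.2.1, hbg.2]
    push_cast; ring

private lemma aux_pos_grade (h : GradedRootSystem Δ d Pos) {x : V} (hx : x ∈ Pos) :
    0 ≤ d x := by
  by_contra hc
  push_neg at hc
  have hxΔ := h.pos_subset hx
  have hneg := h.neg_mem x hxΔ
  have := h.compatible (-x) hneg (by rw [h.grade_neg x hxΔ]; omega)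
  exact (h.pos_iff x hxΔ).mp hx this

/-- Single-step ideal property: subtracting a root of `Δ(0)⁺` from an element of
`I^{k+1}` stays in `I^{k+1}` (if the result is a root). -/
private lemma aux_step (h : GradedRootSystem Δ d Pos) (hI : IsLowerIdeal Δ d Pos 1 I) :
    ∀ k, ∀ μ ∈ idealPow Δ I (k + 1), ∀ α ∈ pos0 d Pos, μ - α ∈ Δ →
      μ - α ∈ idealPow Δ I (k + 1) := by
  intro k
  induction k with
  | zero =>
    intro μ hμ α hα hν
    have hμI : μ ∈ I := hμ
    have hμl := hI.1 hμI
    have hαΔ : α ∈ Δ := h.pos_subset hα.1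
    have hgr : d (μ - α) = 1 := by
      have hadd : μ - α + α ∈ Δ := by rw [sub_add_cancel]; exact hμl.1
      have := h.grade_add (μ - α) hν α hαΔ hadd
      rw [sub_add_cancel, hμl.2, hα.2] at this
      omega
    refine hI.2 μ hμI (μ - α) ⟨hν, hgr⟩ ?_
    show μ - (μ - α) ∈ _
    rw [sub_sub_cancel]
    exact aux_pos0_closure h α hα
  | succ k ihk =>
    intro μ hμ α hα hν
    obtain ⟨hμΔ, a, ha, b, hb, hμe⟩ := hμ
    have haf := aux_I_facts h hI ha
    have hbg := aux_pow_grade h hI k b hb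
    have hαΔ : α ∈ Δ := h.pos_subset hα.1
    have hnegα : -α ∈ Δ := h.neg_mem _ hαΔ
    have habΔ : a + b ∈ Δ := hμe ▸ hμΔ
    have hsΔ : a + b + -α ∈ Δ := by rw [← sub_eq_add_neg, ← hμe]; exact hν
    rcases aux_two_of_three h haf.1 hbg.1 hnegα habΔ hsΔ with (haα | haα) | (hbα | hbα)
    · rw [← sub_eq_add_neg] at haα
      have hgr : d (a - α) = 1 := by
        have hadd : a - α + α ∈ Δ := by rw [sub_add_cancel]; exact haf.1
        have := h.grade_add (a - α) haα α hαΔ hadd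
        rw [sub_add_cancel, haf.2.1, hα.2] at this; omega
      have haI : a - α ∈ I := by
        refine hI.2 a ha (a - α) ⟨haα, hgr⟩ ?_
        show a - (a - α) ∈ _
        rw [sub_sub_cancel]
        exact aux_pos0_closure h α hα
      exact ⟨hν, a - α, haI, b, hb, by rw [hμe]; abel⟩
    · exfalso
      have heq : a = α := sub_eq_zero.mp (by rw [sub_eq_add_neg]; exact haα)
      have h1 : d a = 1 := haf.2.1
      rw [heq, hα.2] at h1
      exact absurd h1 (by norm_num)
    · rw [← sub_eq_add_neg] at hbα
      have hbI := ihk b hb α hα hbα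
      exact ⟨hν, a, ha, b - α, hbI, by rw [hμe]; abel⟩
    · exfalso
      have heq : b = α := sub_eq_zero.mp (by rw [sub_eq_add_neg]; exact hbα)
      have h1 := hbg.2
      rw [heq, hα.2] at h1
      omega

/-- `I^{k+1}` is a lower ideal of `Δ(k+1)` (list form). -/
private lemma aux_ideal_list (h : GradedRootSystem Δ d Pos) (hI : IsLowerIdeal Δ d Pos 1 I) :
    ∀ r k (μ ν : V) (L : List V),
      μ ∈ idealPow Δ I (k + 1) → ν ∈ Δ → d ν = k + 1 →
      (∀ α ∈ L, α ∈ simpleRoots (pos0 d Pos)) → L.length = r → μ - ν = L.sum →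
      ν ∈ idealPow Δ I (k + 1) := by
  intro r
  induction r using Nat.strong_induction_on with
  | _ r ih =>
    intro k μ ν L hμ hν hdν hLm hLl hLs
    classical
    rcases eq_or_ne r 0 with rfl | hr
    · rw [List.length_eq_zero_iff.mp hLl] at hLs
      simp only [List.sum_nil] at hLs
      rwa [← sub_eq_zero.mp hLs]
    · have hLne : L ≠ [] := by
        intro e; rw [e] at hLl; simp at hLl; exact hr hLl.symm
      have hsimpP : ∀ α ∈ L, α ∈ pos0 d Pos := fun α hα => (hLm α hα).1
      have hδne : μ - ν ≠ 0 := by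
        rw [hLs]
        exact aux_sum_ne_zero h L.length L rfl (fun z hz => (hsimpP z hz).1) hLne
      have hδ : 0 < ⟪μ - ν, μ - ν⟫ := aux_inner_self_pos hδne
      have hμg := aux_pow_grade h hI k μ hμ
      have hsplit : 0 < ⟪μ - ν, μ⟫ ∨ ⟪μ - ν, ν⟫ < 0 := by
        by_contra hcc
        push_neg at hcc
        rw [inner_sub_right] at hδ
        linarith [hcc.1, hcc.2]
      rcases hsplit with hpos | hneg
      · have h1 : 0 < ⟪μ, L.sum⟫ := by
          rw [← hLs, real_inner_comm (μ - ν) μ]; exact hpos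
        obtain ⟨α, hαL, hμα⟩ := aux_exists_inner_pos h1
        have hαP : α ∈ pos0 d Pos := (hLm α hαL).1
        have hαΔ : α ∈ Δ := h.pos_subset hαP.1
        have hμne : μ ≠ α := by
          intro e
          have h2 := hμg.2
          rw [e, hαP.2] at h2
          omega
        have hsub := aux_sub_mem h hμg.1 hαΔ hμα hμne
        have hstep := aux_step h hI k μ hμ α hαP hsub
        have hperm := List.perm_cons_erase hαL
        have hsum' : (μ - α) - ν = (L.erase α).sum := by
          have he : L.sum = α + (L.erase α).sum := by rw [hperm.sum_eq, List.sum_cons]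
          rw [show (μ - α) - ν = (μ - ν) - α by abel, hLs, he]; abel
        refine ih (L.erase α).length
          (by have := List.length_erase_add_one hαL; omega)
          k (μ - α) ν (L.erase α) hstep hν hdν
          (fun z hz => hLm z (List.mem_of_mem_erase hz)) rfl hsum'
      · have h1 : ⟪ν, L.sum⟫ < 0 := by
          rw [← hLs, real_inner_comm (μ - ν) ν]; exact hneg
        obtain ⟨α, hαL, hνα⟩ := aux_exists_inner_neg h1
        have hαP : α ∈ pos0 d Pos := (hLm α hαL).1
        have hαΔ : α ∈ Δ := h.pos_subset hαP.1
        have hναΔ : ν + α ∈ Δ := by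
          apply aux_add_mem h hν hαΔ hνα
          intro e
          have hνe : ν = -α := eq_neg_of_add_eq_zero_left e
          have h2 := h.grade_neg α hαΔ
          rw [← hνe, hαP.2] at h2
          omega
        have hgr : d (ν + α) = k + 1 := by
          rw [h.grade_add ν hν α hαΔ hναΔ, hdν, hαP.2]; ring
        have hperm := List.perm_cons_erase hαL
        have hsum' : μ - (ν + α) = (L.erase α).sum := by
          have he : L.sum = α + (L.erase α).sum := by rw [hperm.sum_eq, List.sum_cons]
          rw [show μ - (ν + α) = (μ - ν) - α by abel, hLs, he]; abel
        have hrec := ih (L.erase α).length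
          (by have := List.length_erase_add_one hαL; omega)
          k μ (ν + α) (L.erase α) hμ hναΔ hgr
          (fun z hz => hLm z (List.mem_of_mem_erase hz)) rfl hsum'
        have hst := aux_step h hI k (ν + α) hrec α hαP
          (by rw [add_sub_cancel_right]; exact hν)
        rwa [add_sub_cancel_right] at hst

/-- `I^{k+1}` is a lower ideal of `Δ(k+1)`. -/
private lemma aux_ideal (h : GradedRootSystem Δ d Pos) (hI : IsLowerIdeal Δ d Pos 1 I)
    {k : ℕ} {μ ν : V} (hμ : μ ∈ idealPow Δ I (k + 1)) (hν : ν ∈ Δ) (hdν : d ν = k + 1)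
    (hle : μ - ν ∈ AddSubmonoid.closure (simpleRoots (pos0 d Pos))) :
    ν ∈ idealPow Δ I (k + 1) := by
  obtain ⟨L, hLm, hLs⟩ := AddSubmonoid.exists_list_of_mem_closure hle
  exact aux_ideal_list h hI L.length k μ ν L hμ hν hdν hLm rfl hLs.symm

/-- Every element of `I^{k+1}` is a sum of `k+1` elements of `I`. -/
private lemma aux_pow_sum (h : GradedRootSystem Δ d Pos) (hI : IsLowerIdeal Δ d Pos 1 I) :
    ∀ k, ∀ x ∈ idealPow Δ I (k + 1),
      ∃ L : List V, (∀ y ∈ L, y ∈ I) ∧ L.length = k + 1 ∧ L.sum = x := by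
  intro k
  induction k with
  | zero =>
    intro x hx
    exact ⟨[x], by intro y hy; rw [List.mem_singleton.mp hy]; exact hx, rfl, by simp⟩
  | succ k ihk =>
    intro x hx
    obtain ⟨hxΔ, a, ha, b, hb, hxe⟩ := hx
    obtain ⟨L, hLm, hLl, hLs⟩ := ihk b hb
    refine ⟨a :: L, ?_, by simp [hLl], by rw [List.sum_cons, hLs, hxe]⟩
    intro y hy
    rcases List.mem_cons.mp hy with rfl | hy'
    exacts [ha, hLm y hy']

/-- Conversely, a root which is a sum of `k+1` elements of `I` lies in `I^{k+1}`. -/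
private lemma aux_sum_pow (h : GradedRootSystem Δ d Pos) (hI : IsLowerIdeal Δ d Pos 1 I) :
    ∀ k (x : V), x ∈ Δ → ∀ L : List V, (∀ y ∈ L, y ∈ I) →
      L.length = k + 1 → L.sum = x → x ∈ idealPow Δ I (k + 1) := by
  intro k
  induction k with
  | zero =>
    intro x hxΔ L hLm hLl hLs
    obtain ⟨y, rfl⟩ := List.length_eq_one_iff.mp hLl
    simp only [List.sum_cons, List.sum_nil, add_zero] at hLs
    rw [← hLs]
    exact hLm y (by simp)
  | succ k ihk =>
    intro x hxΔ L hLm hLl hLs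
    classical
    have hx2 : 0 < ⟪x, L.sum⟫ := by
      rw [hLs]; exact aux_inner_self_pos (h.nonzero x hxΔ)
    obtain ⟨β, hβL, hβ⟩ := aux_exists_inner_pos hx2
    have hβI := hLm β hβL
    have hβf := aux_I_facts h hI hβI
    have hperm := List.perm_cons_erase hβL
    have hes : (L.erase β).sum = x - β := by
      have he : L.sum = β + (L.erase β).sum := by rw [hperm.sum_eq, List.sum_cons]
      rw [← hLs, he]; abel
    have hne : x ≠ β := by
      intro e
      have hz : (L.erase β).sum = 0 := by rw [hes, e, sub_self]
      refine aux_sum_ne_zero h _ (L.erase β) rfl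
        (fun z hz' => (aux_I_facts h hI (hLm z (List.mem_of_mem_erase hz'))).2.2) ?_ hz
      intro e2
      have hl := List.length_erase_add_one hβL
      rw [e2] at hl
      simp at hl
      omega
    have hxβ : x - β ∈ Δ := aux_sub_mem h hxΔ hβf.1 hβ hne
    have hrec := ihk (x - β) hxβ (L.erase β)
      (fun z hz' => hLm z (List.mem_of_mem_erase hz'))
      (by have := List.length_erase_add_one hβL; omega) hes
    exact ⟨hxΔ, β, hβI, x - β, hrec, by abel⟩

/-- The main lemma: if `μ ∈ I^{k+1}` and `μ = γ + ν` with `γ, ν` positive roots,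
then `γ ∈ ⟨I⟩` or `ν ∈ ⟨I⟩`. -/
private lemma aux_main (h : GradedRootSystem Δ d Pos) (hI : IsLowerIdeal Δ d Pos 1 I) :
    ∀ k (μ ν : V), μ ∈ idealPow Δ I (k + 1) → ν ∈ Pos →
      μ - ν ∈ Δ → μ - ν ∈ Pos → (μ - ν ∈ gen Δ I ∨ ν ∈ gen Δ I) := by
  intro k
  induction k using Nat.strong_induction_on with
  | _ k ih =>
    intro μ ν hμ hν hγΔ hγP
    have hνΔ := h.pos_subset hν
    have hμg := aux_pow_grade h hI k μ hμ
    have hq0 : 0 ≤ d ν := aux_pos_grade h hν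
    have hp0 : 0 ≤ d (μ - ν) := aux_pos_grade h hγP
    have hpq : d (μ - ν) + d ν = k + 1 := by
      have hadd : μ - ν + ν ∈ Δ := by rw [sub_add_cancel]; exact hμg.1
      have := h.grade_add (μ - ν) hγΔ ν hνΔ hadd
      rw [sub_add_cancel, hμg.2] at this
      omega
    rcases eq_or_ne (d ν) 0 with hq | hq
    · left
      have hmem : μ - ν ∈ idealPow Δ I (k + 1) := by
        apply aux_ideal h hI hμ hγΔ (by omega)
        rw [sub_sub_cancel]
        exact aux_pos0_closure h ν ⟨hν, hq⟩
      exact Set.mem_iUnion.mpr ⟨k, hmem⟩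
    rcases eq_or_ne (d (μ - ν)) 0 with hp | hp
    · right
      have hmem : ν ∈ idealPow Δ I (k + 1) :=
        aux_ideal h hI hμ hνΔ (by omega) (aux_pos0_closure h (μ - ν) ⟨hγP, hp⟩)
      exact Set.mem_iUnion.mpr ⟨k, hmem⟩
    -- now both levels are ≥ 1, hence k ≥ 1
    obtain ⟨k', rfl⟩ : ∃ k', k = k' + 1 := ⟨k - 1, by omega⟩
    obtain ⟨hμΔ, a, ha, b, hb, hμe⟩ := hμ
    have haf := aux_I_facts h hI ha
    have hbg := aux_pow_grade h hI k' b hb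
    have hνneg : -ν ∈ Δ := h.neg_mem _ hνΔ
    have habΔ : a + b ∈ Δ := hμe ▸ hμΔ
    have hsΔ : a + b + -ν ∈ Δ := by rw [← sub_eq_add_neg, ← hμe]; exact hγΔ
    rcases aux_two_of_three h haf.1 hbg.1 hνneg habΔ hsΔ with (haν | haν) | (hbν | hbν)
    · -- a - ν is a root
      rw [← sub_eq_add_neg] at haν
      have hgaν : d (a - ν) + d ν = 1 := by
        have hadd : a - ν + ν ∈ Δ := by rw [sub_add_cancel]; exact haf.1
        have := h.grade_add (a - ν) haν ν hνΔ hadd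
        rw [sub_add_cancel, haf.2.1] at this; omega
      rcases eq_or_ne (d ν) 1 with hq1 | hq1
      · by_cases hc : a - ν ∈ Pos
        · right
          have hν1 : ν ∈ I := by
            refine hI.2 a ha ν ⟨hνΔ, hq1⟩ ?_
            exact aux_pos0_closure h (a - ν) ⟨hc, by omega⟩
          exact Set.mem_iUnion.mpr ⟨0, hν1⟩
        · left
          have hνaP : ν - a ∈ Pos := by
            have hiff := h.pos_iff (a - ν) haν
            have h2 : -(a - ν) ∈ Pos := by
              by_contra hc2
              exact hc (hiff.mpr hc2)
            rwa [neg_sub] at h2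
          have hνaΔ : ν - a ∈ Δ := by rw [← neg_sub]; exact h.neg_mem _ haν
          have hνagr : d (ν - a) = 0 := by
            have hadd : ν - a + a ∈ Δ := by rw [sub_add_cancel]; exact hνΔ
            have := h.grade_add (ν - a) hνaΔ a haf.1 hadd
            rw [sub_add_cancel, haf.2.1, hq1] at this; omega
          have hmem : μ - ν ∈ idealPow Δ I (k' + 1) := by
            apply aux_ideal h hI hb hγΔ (by omega)
            rw [show b - (μ - ν) = ν - a by rw [hμe]; abel]
            exact aux_pos0_closure h (ν - a) ⟨hνaP, hνagr⟩
          exact Set.mem_iUnion.mpr ⟨k', hmem⟩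
      · -- d ν ≥ 2
        have hνaΔ : ν - a ∈ Δ := by rw [← neg_sub]; exact h.neg_mem _ haν
        have hνagr : d (ν - a) = d ν - 1 := by
          have hadd : ν - a + a ∈ Δ := by rw [sub_add_cancel]; exact hνΔ
          have := h.grade_add (ν - a) hνaΔ a haf.1 hadd
          rw [sub_add_cancel, haf.2.1] at this; omega
        have hνaP : ν - a ∈ Pos := h.compatible _ hνaΔ (by omega)
        have heq2 : b - (ν - a) = μ - ν := by rw [hμe]; abel
        rcases ih k' (by omega) b (ν - a) hb hνaP (by rw [heq2]; exact hγΔ)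
          (by rw [heq2]; exact hγP) with hg | hg
        · left; rwa [heq2] at hg
        · right
          obtain ⟨j, hj⟩ := Set.mem_iUnion.mp hg
          refine Set.mem_iUnion.mpr ⟨j + 1, ?_⟩
          exact ⟨hνΔ, a, ha, ν - a, hj, by abel⟩
    · -- a = ν
      right
      have heq : a = ν := sub_eq_zero.mp (by rw [sub_eq_add_neg]; exact haν)
      exact Set.mem_iUnion.mpr ⟨0, heq ▸ ha⟩
    · -- b - ν is a root
      rw [← sub_eq_add_neg] at hbν
      have hbνgr : d (b - ν) + d ν = k' + 1 := by
        have hadd : b - ν + ν ∈ Δ := by rw [sub_add_cancel]; exact hbg.1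
        have := h.grade_add (b - ν) hbν ν hνΔ hadd
        rw [sub_add_cancel, hbg.2] at this; omega
      rcases eq_or_ne (d (μ - ν)) 1 with hp1 | hp1
      · by_cases hc : b - ν ∈ Pos
        · right
          have hmem : ν ∈ idealPow Δ I (k' + 1) := by
            apply aux_ideal h hI hb hνΔ (by omega)
            exact aux_pos0_closure h (b - ν) ⟨hc, by omega⟩
          exact Set.mem_iUnion.mpr ⟨k', hmem⟩
        · left
          have hνbP : ν - b ∈ Pos := by
            have hiff := h.pos_iff (b - ν) hbν
            have h2 : -(b - ν) ∈ Pos := by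
              by_contra hc2
              exact hc (hiff.mpr hc2)
            rwa [neg_sub] at h2
          have hνbgr : d (ν - b) = 0 := by
            have h2 := h.grade_neg (b - ν) hbν
            rw [neg_sub] at h2
            omega
          have hmem : μ - ν ∈ I := by
            refine hI.2 a ha (μ - ν) ⟨hγΔ, hp1⟩ ?_
            show a - (μ - ν) ∈ _
            rw [show a - (μ - ν) = ν - b by rw [hμe]; abel]
            exact aux_pos0_closure h (ν - b) ⟨hνbP, hνbgr⟩
          exact Set.mem_iUnion.mpr ⟨0, hmem⟩
      · -- d (μ - ν) ≥ 2
        have hbνP : b - ν ∈ Pos := h.compatible _ hbν (by omega)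
        rcases ih k' (by omega) b ν hb hν hbν hbνP with hg | hg
        · left
          obtain ⟨j, hj⟩ := Set.mem_iUnion.mp hg
          refine Set.mem_iUnion.mpr ⟨j + 1, ?_⟩
          exact ⟨hγΔ, a, ha, b - ν, hj, by rw [hμe]; abel⟩
        · right; exact hg
    · -- b = ν
      right
      have heq : b = ν := sub_eq_zero.mp (by rw [sub_eq_add_neg]; exact hbν)
      exact Set.mem_iUnion.mpr ⟨k', heq ▸ hb⟩

end AuxLemmas

/-- If `I` is a lower ideal of `Δ(1)`, then `⟨I⟩` is a bi-convex subset of `Δ⁺`. -/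
theorem stmt4 (Δ : Set V) (d : V → ℤ) (Pos : Set V)
    (h : GradedRootSystem Δ d Pos) (I : Set V)
    (hI : IsLowerIdeal Δ d Pos 1 I) :
    IsBiConvex Δ Pos (gen Δ I) := by
  constructor
  · -- `⟨I⟩` is closed
    intro γ₁ h1 γ₂ h2 hΔ
    simp only [gen, Set.mem_iUnion] at h1 h2 ⊢
    obtain ⟨m, hm⟩ := h1
    obtain ⟨n, hn⟩ := h2
    obtain ⟨L₁, hm1, hm2, hm3⟩ := aux_pow_sum h hI m γ₁ hm
    obtain ⟨L₂, hn1, hn2, hn3⟩ := aux_pow_sum h hI n γ₂ hn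
    refine ⟨m + n + 1, aux_sum_pow h hI (m + n + 1) (γ₁ + γ₂) hΔ (L₁ ++ L₂) ?_ ?_ ?_⟩
    · intro y hy
      rcases List.mem_append.mp hy with hy | hy
      exacts [hm1 y hy, hn1 y hy]
    · rw [List.length_append, hm2, hn2]; ring
    · rw [List.sum_append, hm3, hn3]
  · -- `Δ⁺ \ ⟨I⟩` is closed
    intro γ₁ h1 γ₂ h2 hΔ
    have hp := h.pos_add γ₁ h1.1 γ₂ h2.1 hΔ
    refine ⟨hp, ?_⟩
    intro hg
    simp only [gen, Set.mem_iUnion] at hg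
    obtain ⟨k, hk⟩ := hg
    have hmain := aux_main h hI k (γ₁ + γ₂) γ₂ hk h2.1
      (by rw [add_sub_cancel_right]; exact h.pos_subset h1.1)
      (by rw [add_sub_cancel_right]; exact h1.1)
    rw [add_sub_cancel_right] at hmain
    rcases hmain with hg1 | hg2
    · exact h1.2 hg1
    · exact h2.2 hg2
end

section
/- Let W be the Weyl group of Δ and W⁰ = {w ∈ W : w(α) ∈ Δ⁺ for all α ∈ Δ(0)⁺} the minimal-length coset representatives of W/W(0). If w ∈ W⁰, then N(w) ∩ Δ(1) is a lower ideal of the poset Δ(1), where N(w) = {γ ∈ Δ⁺ : −w(γ) ∈ Δ⁺}. -/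
open RealInnerProductSpace

variable {V : Type*} [NormedAddCommGroup V] [InnerProductSpace ℝ V] [FiniteDimensional ℝ V]

set_option linter.unusedSectionVars false

lemma sref_apply (α β : V) : sref α β = β - (2 * ⟪β, α⟫ / ⟪α, α⟫) • α := by
  have h1 : sref α β = Submodule.reflection ((ℝ ∙ α)ᗮ) β := rfl
  rw [h1, Submodule.reflection_orthogonal_apply, Submodule.reflection_singleton_apply]
  rw [real_inner_self_eq_norm_sq, real_inner_comm]
  simp only [RCLike.ofReal_real_eq_id, id, two_smul]
  module

/-- Weyl group elements preserve the root system. -/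
lemma weyl_maps {Δ : Set V} {d : V → ℤ} {Pos : Set V} (h : GradedRootSystem Δ d Pos)
    {w : V ≃ₗ[ℝ] V} (hw : w ∈ weyl Δ) : ∀ γ ∈ Δ, w γ ∈ Δ := by
  have key : ∀ u : V ≃ₗ[ℝ] V, (∀ γ ∈ Δ, u γ ∈ Δ) → ∀ γ ∈ Δ, u⁻¹ γ ∈ Δ := by
    intro u hu
    have hmt : Set.MapsTo u Δ Δ := hu
    have hbij : Set.BijOn u Δ Δ :=
      (h.finite.injOn_iff_bijOn_of_mapsTo hmt).mp (u.injective.injOn)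
    intro γ hγ
    obtain ⟨x, hx, hxγ⟩ := hbij.surjOn hγ
    have : u⁻¹ γ = x := by
      have := congrArg u.symm hxγ
      simpa using this.symm
    rwa [this]
  refine Subgroup.closure_induction ?_ ?_ ?_ ?_ hw
  · rintro g ⟨α, hα, rfl⟩ γ hγ
    rw [sref_apply]
    exact h.reflect_mem α hα γ hγ
  · intro γ hγ; simpa using hγ
  · intro a b _ _ ha hb γ hγ
    exact ha _ (hb γ hγ)
  · intro a _ ha
    exact key a ha

/-- α, β roots, ⟪β, α⟫ > 0, β ≠ α ⇒ β - α is a root. -/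
lemma sub_mem_of_inner_pos {Δ : Set V} {d : V → ℤ} {Pos : Set V}
    (h : GradedRootSystem Δ d Pos) {α β : V} (hα : α ∈ Δ) (hβ : β ∈ Δ)
    (hip : 0 < ⟪β, α⟫) (hne : β ≠ α) : β - α ∈ Δ := by
  have hα0 : α ≠ 0 := h.nonzero α hα
  have hβ0 : β ≠ 0 := h.nonzero β hβ
  have hnα : (0:ℝ) < ‖α‖ := norm_pos_iff.mpr hα0
  have hnβ : (0:ℝ) < ‖β‖ := norm_pos_iff.mpr hβ0
  have hαα : (0:ℝ) < ⟪α, α⟫ := by rw [real_inner_self_eq_norm_sq]; positivity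
  have hββ : (0:ℝ) < ⟪β, β⟫ := by rw [real_inner_self_eq_norm_sq]; positivity
  obtain ⟨n, hn⟩ := h.crystallographic α hα β hβ
  obtain ⟨m, hm⟩ := h.crystallographic β hβ α hα
  have hnpos : (0:ℝ) < n := by rw [hn]; positivity
  have hmpos : (0:ℝ) < m := by
    rw [hm, real_inner_comm]; positivity
  -- strict Cauchy-Schwarz: ⟪β, α⟫ < ‖α‖ * ‖β‖
  have hindep : ‖α‖ • β ≠ ‖β‖ • α := by
    intro hcontra
    have h2 : β = (‖α‖⁻¹ * ‖β‖) • α := by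
      have h3 := congrArg (fun v => (‖α‖)⁻¹ • v) hcontra
      simpa [smul_smul, inv_mul_cancel₀ hnα.ne'] using h3
    rcases h.reduced α hα _ (h2 ▸ hβ) with hc | hc
    · exact hne (by rw [h2, hc, one_smul])
    · have hp : (0:ℝ) < ‖α‖⁻¹ * ‖β‖ := by positivity
      rw [hc] at hp; linarith
  have hcs : ⟪β, α⟫ < ‖β‖ * ‖α‖ := inner_lt_norm_mul_iff_real.mpr hindep
  have hprod : (n:ℝ) * (m:ℝ) < 4 := by
    rw [hn, hm, real_inner_comm β α]
    rw [real_inner_self_eq_norm_sq, real_inner_self_eq_norm_sq]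
    have h1 : 2 * ⟪β, α⟫ / ‖α‖ ^ 2 * (2 * ⟪β, α⟫ / ‖β‖ ^ 2)
        = 4 * (⟪β, α⟫ * ⟪β, α⟫) / (‖α‖^2 * ‖β‖^2) := by ring
    rw [h1]
    rw [div_lt_iff₀ (by positivity)]
    nlinarith [hcs, hip]
  have hn1 : (0:ℤ) < n := by exact_mod_cast hnpos
  have hm1 : (0:ℤ) < m := by exact_mod_cast hmpos
  have hnm : n * m < 4 := by exact_mod_cast hprod
  have hcase : n = 1 ∨ m = 1 := by
    by_contra hc
    push_neg at hc
    have h2n : 2 ≤ n := by omega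
    have h2m : 2 ≤ m := by omega
    nlinarith
  rcases hcase with hc | hc
  · have := h.reflect_mem α hα β hβ
    rw [← hn, hc] at this
    simpa using this
  · have := h.reflect_mem β hβ α hα
    rw [← hm, hc] at this
    simp only [Int.cast_one, one_smul] at this
    have := h.neg_mem _ this
    simpa using this


/-- β + α is a root when ⟪β, α⟫ < 0 and β ≠ -α. -/
lemma add_mem_of_inner_neg {Δ : Set V} {d : V → ℤ} {Pos : Set V}
    (h : GradedRootSystem Δ d Pos) {α β : V} (hα : α ∈ Δ) (hβ : β ∈ Δ)
    (hip : ⟪β, α⟫ < 0) (hne : β ≠ -α) : β + α ∈ Δ := by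
  have h1 : -β ∈ Δ := h.neg_mem β hβ
  have h2 : 0 < ⟪-β, α⟫ := by rw [inner_neg_left]; linarith
  have h3 : -β ≠ α := by
    intro hc
    exact hne (by rw [← hc]; simp)
  have h4 := sub_mem_of_inner_pos h hα h1 h2 h3
  have h5 := h.neg_mem _ h4
  simpa [neg_sub, sub_neg_eq_add, add_comm] using h5

/-- Elements of the additive closure are sums of lists. -/
lemma mem_closure_list {S : Set V} {x : V} (hx : x ∈ AddSubmonoid.closure S) :
    ∃ l : List V, (∀ a ∈ l, a ∈ S) ∧ l.sum = x := by
  refine AddSubmonoid.closure_induction ?_ ?_ ?_ hx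
  · intro y hy
    exact ⟨[y], by simpa using hy, by simp⟩
  · exact ⟨[], by simp, by simp⟩
  · rintro a b _ _ ⟨l₁, hl₁, hs₁⟩ ⟨l₂, hl₂, hs₂⟩
    refine ⟨l₁ ++ l₂, ?_, by rw [List.sum_append, hs₁, hs₂]⟩
    intro c hc
    rcases List.mem_append.mp hc with hc | hc
    · exact hl₁ c hc
    · exact hl₂ c hc

lemma exists_pos_inner {x : V} {l : List V} (hx : x ≠ 0) (hsum : l.sum = x) :
    ∃ a ∈ l, 0 < ⟪x, a⟫ := by
  by_contra hc
  push_neg at hc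
  have key : ∀ t : List V, (∀ a ∈ t, ⟪x, a⟫ ≤ 0) → ⟪x, t.sum⟫ ≤ 0 := by
    intro t
    induction t with
    | nil => simp
    | cons b s ih =>
      intro ht
      rw [List.sum_cons, inner_add_right]
      have h1 := ht b (by simp)
      have h2 := ih (fun a ha => ht a (by simp [ha]))
      linarith
  have h1 := key l hc
  rw [hsum, real_inner_self_eq_norm_sq] at h1
  have h2 : 0 < ‖x‖ := norm_pos_iff.mpr hx
  nlinarith

/-- The main induction. -/
lemma key_induction {Δ : Set V} {d : V → ℤ} {Pos : Set V}
    (h : GradedRootSystem Δ d Pos) {w : V ≃ₗ[ℝ] V} (hwW : w ∈ weyl Δ)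
    (hw0 : ∀ γ ∈ pos0 d Pos, w γ ∈ Pos) :
    ∀ m : ℕ, ∀ γ ν : V, γ ∈ Δ → d γ = 1 → -(w γ) ∈ Pos → ν ∈ Δ → d ν = 1 →
    ∀ l : List V, l.length = m → (∀ a ∈ l, a ∈ simpleRoots (pos0 d Pos)) →
    γ - ν = l.sum → -(w ν) ∈ Pos := by
  intro m
  induction m with
  | zero =>
    intro γ ν _ _ hγinv _ _ l hlen _ hsum
    rw [List.length_eq_zero_iff] at hlen
    subst hlen
    simp only [List.sum_nil, sub_eq_zero] at hsum
    rwa [← hsum]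
  | succ m ih =>
    intro γ ν hγΔ hγd hγinv hνΔ hνd l hlen hl hsum
    by_cases hγν : γ = ν
    · rwa [← hγν]
    · have hσ : γ - ν ≠ 0 := sub_ne_zero.mpr hγν
      obtain ⟨α, hαl, hipσ⟩ := exists_pos_inner hσ hsum.symm
      have hαS := hl α hαl
      have hαpos0 : α ∈ pos0 d Pos := hαS.1
      have hαPos : α ∈ Pos := hαpos0.1
      have hαd : d α = 0 := hαpos0.2
      have hαΔ : α ∈ Δ := h.pos_subset hαPos
      -- the list with α removed
      classical
      set l' := l.erase α with hl'def
      have hperm : List.Perm l (α :: l') := List.perm_cons_erase hαl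
      have hlen' : l'.length = m := by
        have := hperm.length_eq
        simp only [List.length_cons, hlen] at this
        omega
      have hl's : ∀ a ∈ l', a ∈ simpleRoots (pos0 d Pos) :=
        fun a ha => hl a (List.mem_of_mem_erase ha)
      have hsum' : l.sum = α + l'.sum := by
        rw [hperm.sum_eq, List.sum_cons]
      rw [inner_sub_left] at hipσ
      have hwα : w α ∈ Pos := hw0 α hαpos0
      by_cases hcase : 0 < ⟪γ, α⟫
      · -- descend from γ
        have hne : γ ≠ α := by
          intro hc; rw [hc, hαd] at hγd; omega
        have hγ'Δ : γ - α ∈ Δ := sub_mem_of_inner_pos h hαΔ hγΔ hcase hne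
        have hγ'd : d (γ - α) = 1 := by
          have := h.grade_add (γ - α) hγ'Δ α hαΔ (by rw [sub_add_cancel]; exact hγΔ)
          rw [sub_add_cancel, hγd, hαd] at this
          omega
        have hγ'inv : -(w (γ - α)) ∈ Pos := by
          have heq : -(w (γ - α)) = -(w γ) + w α := by
            rw [map_sub]; abel
          have hmem : -(w (γ - α)) ∈ Δ := by
            rw [← map_neg]
            exact weyl_maps h hwW _ (h.neg_mem _ hγ'Δ)
          rw [heq] at hmem ⊢
          exact h.pos_add _ hγinv _ hwα hmem
        refine ih (γ - α) ν hγ'Δ hγ'd hγ'inv hνΔ hνd l' hlen' hl's ?_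
        have h5 : γ - ν = α + l'.sum := by rw [hsum, hsum']
        rw [show γ - α - ν = γ - ν - α by abel, h5]; abel
      · -- ascend from ν
        have hipν : ⟪ν, α⟫ < 0 := by linarith
        have hne : ν ≠ -α := by
          intro hc
          have := h.grade_neg α hαΔ
          rw [← hc] at this
          rw [hνd, hαd] at this; omega
        have hν'Δ : ν + α ∈ Δ := add_mem_of_inner_neg h hαΔ hνΔ hipν hne
        have hν'd : d (ν + α) = 1 := by
          have := h.grade_add ν hνΔ α hαΔ hν'Δ
          rw [hνd, hαd] at this; omega
        have hν'sum : γ - (ν + α) = l'.sum := by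
          have : γ - ν = α + l'.sum := by rw [hsum, hsum']
          rw [show γ - (ν + α) = γ - ν - α by abel, this]; abel
        have hν'inv : -(w (ν + α)) ∈ Pos :=
          ih γ (ν + α) hγΔ hγd hγinv hν'Δ hν'd l' hlen' hl's hν'sum
        have heq : -(w ν) = -(w (ν + α)) + w α := by
          rw [map_add]; abel
        have hmem : -(w ν) ∈ Δ := by
          rw [← map_neg]
          exact weyl_maps h hwW _ (h.neg_mem _ hνΔ)
        rw [heq] at hmem ⊢
        exact h.pos_add _ hν'inv _ hwα hmem

/-- If `w ∈ W⁰`, then `N(w) ∩ Δ(1)` is a lower ideal of the poset `Δ(1)`. -/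
theorem stmt6 (Δ : Set V) (d : V → ℤ) (Pos : Set V)
    (h : GradedRootSystem Δ d Pos) (w : V ≃ₗ[ℝ] V) (hw : w ∈ W0 Δ d Pos) :
    IsLowerIdeal Δ d Pos 1 (invSet Pos w ∩ level Δ d 1) := by
  obtain ⟨hwW, hw0⟩ := hw
  constructor
  · exact Set.inter_subset_right
  · rintro γ ⟨hγinv, hγlev⟩ ν hνlev hle
    obtain ⟨l, hl, hsum⟩ := mem_closure_list hle
    have hνinv : -(w ν) ∈ Pos :=
      key_induction h hwW hw0 l.length γ ν hγlev.1 hγlev.2 hγinv.2 hνlev.1 hνlev.2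
        l rfl hl hsum.symm
    exact ⟨⟨h.compatible ν hνlev.1 (le_of_eq hνlev.2.symm), hνinv⟩, hνlev⟩
end
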